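/- Let $F$ be a field and $n, u$ positive integers with $x^n - u$ irreducible over $\mathbb{Q}$. Let $(\ )^*$ be the $F$-endomorphism of $F[x_0,\dots,x_{n-1}]$ with $x_i^* = x_{i+1}$ for $0 \le i < n-1$ and $x_{n-1}^* = x_0^u$. For $f, g$ with $d(g) > 0$, define $f \circ g = f(g, g^*, \dots, g^{(n-1)*})$. Then $d(f \circ g) = d(f) \cdot d(g)$ for all nonzero $f \in F[x_0,\dots,x_{n-1}]$ and all $g \in F[x_0,\dots,x_{n-1}]$ with $d(g) > 0$. -/

import Mathlib

open MvPolynomial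

noncomputable section

def wdeg (n u : ℕ) (e : Fin n →₀ ℕ) : ℝ :=
  ∑ i : Fin n, (e i : ℝ) * (u : ℝ) ^ (((i : ℕ) : ℝ) / (n : ℝ))

/-- The `ℤ[u^{1/n}]`-valued degree `d(f)` (as a real number): the maximum weighted degree of the
terms of `f` (junk value `0` for `f = 0`). -/
def dmax {F : Type*} [Field F] (n u : ℕ) (f : MvPolynomial (Fin n) F) : ℝ :=
  if h : f.support.Nonempty then f.support.sup' h (wdeg n u) else 0

/-- The star endomorphism of `F[x₀,…,x_{n-1}]`: `xᵢ* = x_{i+1}` for `i < n-1`, `x_{n-1}* = x₀^u`. -/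
def starP (F : Type*) [Field F] (n u : ℕ) :
    MvPolynomial (Fin n) F →ₐ[F] MvPolynomial (Fin n) F :=
  MvPolynomial.aeval (fun i : Fin n =>
    if h : (i : ℕ) + 1 < n then X (⟨(i : ℕ) + 1, h⟩ : Fin n)
    else X (⟨0, i.pos⟩ : Fin n) ^ u)

/-- The composition `f ∘ g = f(g, g*, …, g^{(n-1)*})` for multivariate polynomials. -/
def pcompP {F : Type*} [Field F] (n u : ℕ) (f g : MvPolynomial (Fin n) F) :
    MvPolynomial (Fin n) F :=
  MvPolynomial.aeval (fun i : Fin n => (⇑(starP F n u))^[(i : ℕ)] g) f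

namespace DmaxAux

/-- `u^{1/n}` as a real number. -/
def tha (n u : ℕ) : ℝ := (u : ℝ) ^ ((n : ℝ)⁻¹)

lemma tha_pos (n : ℕ) {u : ℕ} (hu : 0 < u) : 0 < tha n u :=
  Real.rpow_pos_of_pos (by positivity) _

lemma tha_pow_n {n u : ℕ} (hn : 0 < n) : tha n u ^ n = (u : ℝ) := by
  rw [tha, ← Real.rpow_natCast (((u:ℝ)) ^ ((n:ℝ)⁻¹)), ← Real.rpow_mul (by positivity),
    inv_mul_cancel₀ (by positivity), Real.rpow_one]

lemma wdeg_eq_theta (n u : ℕ) (e : Fin n →₀ ℕ) :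
    wdeg n u e = ∑ i : Fin n, (e i : ℝ) * tha n u ^ (i : ℕ) := by
  refine Finset.sum_congr rfl fun i _ => ?_
  rw [tha, ← Real.rpow_natCast ((u:ℝ) ^ ((n:ℝ)⁻¹)) (i:ℕ), ← Real.rpow_mul (by positivity),
    inv_mul_eq_div]

lemma wdeg_add (n u : ℕ) (a b : Fin n →₀ ℕ) :
    wdeg n u (a + b) = wdeg n u a + wdeg n u b := by
  simp only [wdeg, Finsupp.add_apply, Nat.cast_add, add_mul]
  rw [Finset.sum_add_distrib]

lemma wdeg_zero (n u : ℕ) : wdeg n u 0 = 0 := by simp [wdeg]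

lemma wdeg_single (n u : ℕ) (j : Fin n) (k : ℕ) :
    wdeg n u (Finsupp.single j k) = (k : ℝ) * tha n u ^ (j : ℕ) := by
  rw [wdeg_eq_theta]
  rw [Finset.sum_eq_single j]
  · rw [Finsupp.single_eq_same]
  · intro i _ hij
    rw [Finsupp.single_eq_of_ne' (Ne.symm hij), Nat.cast_zero, zero_mul]
  · simp

lemma wdeg_eq_sum_support (n u : ℕ) (e : Fin n →₀ ℕ) :
    wdeg n u e = ∑ i ∈ e.support, (e i : ℝ) * tha n u ^ (i : ℕ) := by
  rw [wdeg_eq_theta]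
  refine (Finset.sum_subset (Finset.subset_univ _) ?_).symm
  intro i _ hi
  rw [Finsupp.notMem_support_iff.mp hi, Nat.cast_zero, zero_mul]

lemma wdeg_injective {n u : ℕ} (hn : 0 < n) (hu : 0 < u)
    (hirr : Irreducible ((Polynomial.X : Polynomial ℚ) ^ n - Polynomial.C (u : ℚ))) :
    Function.Injective (wdeg n u) := by
  set θ : ℝ := tha n u with hθdef
  have hθn : θ ^ n = (u : ℝ) := tha_pow_n hn
  have hroot : Polynomial.aeval θ ((Polynomial.X : Polynomial ℚ) ^ n - Polynomial.C (u:ℚ)) = 0 := by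
    simp [hθn]
  have hmonic : ((Polynomial.X : Polynomial ℚ) ^ n - Polynomial.C (u:ℚ)).Monic :=
    Polynomial.monic_X_pow_sub_C _ hn.ne'
  have hmin : minpoly ℚ θ = (Polynomial.X : Polynomial ℚ) ^ n - Polynomial.C (u:ℚ) :=
    (minpoly.eq_of_irreducible_of_monic hirr hroot hmonic).symm
  have key : ∀ a b : Fin n → ℚ,
      (∑ i : Fin n, (a i : ℝ) * θ ^ (i:ℕ)) = (∑ i : Fin n, (b i : ℝ) * θ ^ (i:ℕ)) → a = b := by
    intro a b hab
    by_contra hne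
    set q : Polynomial ℚ := ∑ i : Fin n, Polynomial.C (a i - b i) * Polynomial.X ^ (i:ℕ) with hq
    have hqa : Polynomial.aeval θ q = 0 := by
      simp only [hq, map_sum, map_mul, Polynomial.aeval_C, map_pow, Polynomial.aeval_X,
        eq_ratCast, Rat.cast_sub, sub_mul]
      rw [Finset.sum_sub_distrib]
      rw [show ∀ x:ℝ, ∀ y:ℝ, x = y → x - y = 0 from fun x y h => by rw [h, sub_self]]
      exact hab
    have hq0 : q ≠ 0 := by
      intro h0
      apply hne
      funext i
      have hco : q.coeff (i:ℕ) = a i - b i := by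
        rw [hq, Polynomial.finset_sum_coeff]
        rw [Finset.sum_eq_single i]
        · rw [Polynomial.coeff_C_mul, Polynomial.coeff_X_pow, if_pos rfl, mul_one]
        · intro j _ hj
          rw [Polynomial.coeff_C_mul, Polynomial.coeff_X_pow,
            if_neg (fun h => hj (Fin.val_injective h).symm), mul_zero]
        · simp
      rw [h0, Polynomial.coeff_zero] at hco
      exact sub_eq_zero.mp hco.symm
    have hdle := minpoly.degree_le_of_ne_zero ℚ θ hq0 hqa
    rw [hmin, Polynomial.degree_X_pow_sub_C hn] at hdle
    have hdlt : q.degree < (n : WithBot ℕ) := by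
      apply lt_of_le_of_lt (Polynomial.degree_sum_le _ _)
      rw [Finset.sup_lt_iff (by exact_mod_cast WithBot.bot_lt_coe n)]
      intro i _
      calc (Polynomial.C (a i - b i) * Polynomial.X ^ (i:ℕ)).degree
          ≤ ((i:ℕ) : WithBot ℕ) := by
            simpa using Polynomial.degree_C_mul_X_pow_le (i:ℕ) (a i - b i)
        _ < (n : WithBot ℕ) := by exact_mod_cast i.isLt
    exact absurd hdle (not_le_of_gt hdlt)
  intro e f hef
  rw [wdeg_eq_theta, wdeg_eq_theta] at hef
  have := key (fun i => (e i : ℚ)) (fun i => (f i : ℚ)) (by push_cast; exact hef)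
  ext i
  exact_mod_cast congrFun this i

section Poly

variable {F : Type*} [Field F] {n u : ℕ}

lemma le_dmax {f : MvPolynomial (Fin n) F} {E : Fin n →₀ ℕ} (h : E ∈ f.support) :
    wdeg n u E ≤ dmax n u f := by
  rw [dmax, dif_pos ⟨E, h⟩]
  exact Finset.le_sup' _ h

lemma dmax_eq_of {f : MvPolynomial (Fin n) F} {D : ℝ}
    (h1 : ∃ e ∈ f.support, wdeg n u e = D)
    (h2 : ∀ e ∈ f.support, wdeg n u e ≤ D) : dmax n u f = D := by
  obtain ⟨e, he, hD⟩ := h1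
  rw [dmax, dif_pos ⟨e, he⟩]
  exact le_antisymm (Finset.sup'_le _ _ h2) (hD ▸ Finset.le_sup' _ he)

lemma exists_wdeg_eq_dmax {f : MvPolynomial (Fin n) F} (hf : f ≠ 0) :
    ∃ e ∈ f.support, wdeg n u e = dmax n u f := by
  have hne : f.support.Nonempty := support_nonempty.mpr hf
  obtain ⟨b, hb, hval⟩ := Finset.exists_mem_eq_sup' hne (wdeg n u)
  exact ⟨b, hb, by rw [dmax, dif_pos hne, hval]⟩

lemma dmax_monomial {e : Fin n →₀ ℕ} {c : F} (hc : c ≠ 0) :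
    dmax n u (monomial e c : MvPolynomial (Fin n) F) = wdeg n u e := by
  refine dmax_eq_of ⟨e, ?_, rfl⟩ ?_
  · rw [mem_support_iff, coeff_monomial, if_pos rfl]; exact hc
  · intro e' he'
    rw [mem_support_iff, coeff_monomial] at he'
    by_cases h : e = e'
    · exact le_of_eq (by rw [h])
    · rw [if_neg h] at he'; exact absurd rfl he'

lemma dmax_mul (hinj : Function.Injective (wdeg n u)) {p q : MvPolynomial (Fin n) F}
    (hp : p ≠ 0) (hq : q ≠ 0) : dmax n u (p * q) = dmax n u p + dmax n u q := by
  obtain ⟨ep, hep, hwp⟩ := exists_wdeg_eq_dmax hp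
  obtain ⟨eq', heq, hwq⟩ := exists_wdeg_eq_dmax hq
  have hcoeff : coeff (ep + eq') (p * q) = coeff ep p * coeff eq' q := by
    rw [coeff_mul]
    refine Finset.sum_eq_single_of_mem (ep, eq') (Finset.HasAntidiagonal.mem_antidiagonal.mpr rfl) ?_
    rintro ⟨a, b⟩ hab hne
    have habs : a + b = ep + eq' := Finset.HasAntidiagonal.mem_antidiagonal.mp hab
    by_contra h
    have ha : coeff a p ≠ 0 := fun h' => h (by rw [h', zero_mul])
    have hb : coeff b q ≠ 0 := fun h' => h (by rw [h', mul_zero])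
    have hwa : wdeg n u a ≤ dmax n u p := le_dmax (mem_support_iff.mpr ha)
    have hwb : wdeg n u b ≤ dmax n u q := le_dmax (mem_support_iff.mpr hb)
    have hsum : wdeg n u a + wdeg n u b = dmax n u p + dmax n u q := by
      rw [← wdeg_add, habs, wdeg_add, hwp, hwq]
    have h1 : wdeg n u a = dmax n u p := by linarith
    have h2 : wdeg n u b = dmax n u q := by linarith
    exact hne (Prod.ext (hinj (h1.trans hwp.symm)) (hinj (h2.trans hwq.symm)))
  have hc0 : coeff (ep + eq') (p * q) ≠ 0 := by
    rw [hcoeff]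
    exact mul_ne_zero (mem_support_iff.mp hep) (mem_support_iff.mp heq)
  refine dmax_eq_of ⟨ep + eq', mem_support_iff.mpr hc0, by rw [wdeg_add, hwp, hwq]⟩ ?_
  intro E hE
  have hc : coeff E (p * q) ≠ 0 := mem_support_iff.mp hE
  rw [coeff_mul] at hc
  obtain ⟨⟨a, b⟩, hab, hterm⟩ := Finset.exists_ne_zero_of_sum_ne_zero hc
  have ha : coeff a p ≠ 0 := fun h' => hterm (by rw [h', zero_mul])
  have hb : coeff b q ≠ 0 := fun h' => hterm (by rw [h', mul_zero])
  have : E = a + b := (Finset.HasAntidiagonal.mem_antidiagonal.mp hab).symm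
  rw [this, wdeg_add]
  exact add_le_add (le_dmax (mem_support_iff.mpr ha)) (le_dmax (mem_support_iff.mpr hb))

lemma dmax_one : dmax n u (1 : MvPolynomial (Fin n) F) = 0 := by
  have : (1 : MvPolynomial (Fin n) F) = monomial 0 1 := by simp
  rw [this, dmax_monomial one_ne_zero, wdeg_zero]

lemma dmax_pow (hinj : Function.Injective (wdeg n u)) {p : MvPolynomial (Fin n) F}
    (hp : p ≠ 0) (k : ℕ) : dmax n u (p ^ k) = (k : ℝ) * dmax n u p := by
  induction k with
  | zero => simp [dmax_one]
  | succ m ih =>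
    rw [pow_succ, dmax_mul hinj (pow_ne_zero m hp) hp, ih]
    push_cast; ring

lemma dmax_prod (hinj : Function.Injective (wdeg n u)) {t : Finset (Fin n)}
    {p : Fin n → MvPolynomial (Fin n) F} (hp : ∀ i ∈ t, p i ≠ 0) :
    dmax n u (∏ i ∈ t, p i) = ∑ i ∈ t, dmax n u (p i) := by
  induction t using Finset.cons_induction with
  | empty => simp [dmax_one]
  | cons a s has ih =>
    rw [Finset.prod_cons, Finset.sum_cons,
      dmax_mul hinj (hp a (Finset.mem_cons_self a s))
        (Finset.prod_ne_zero_iff.mpr fun i hi => hp i (Finset.mem_cons_of_mem hi)),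
      ih (fun i hi => hp i (Finset.mem_cons_of_mem hi))]

lemma dmax_sum_eq {s : Finset (Fin n →₀ ℕ)} {T : (Fin n →₀ ℕ) → MvPolynomial (Fin n) F}
    {e0 : Fin n →₀ ℕ} (hs : e0 ∈ s) (hT0 : T e0 ≠ 0)
    (hlt : ∀ e ∈ s, e ≠ e0 → dmax n u (T e) < dmax n u (T e0)) :
    (∑ e ∈ s, T e) ≠ 0 ∧ dmax n u (∑ e ∈ s, T e) = dmax n u (T e0) := by
  obtain ⟨E, hE, hwE⟩ := exists_wdeg_eq_dmax hT0
  have hcoeff : coeff E (∑ e ∈ s, T e) = coeff E (T e0) := by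
    rw [coeff_sum]
    refine Finset.sum_eq_single_of_mem e0 hs ?_
    intro e he hne
    by_contra h
    have h1 : wdeg n u E ≤ dmax n u (T e) := le_dmax (mem_support_iff.mpr h)
    have h2 := hlt e he hne
    rw [hwE] at h1
    exact absurd h1 (not_le_of_gt h2)
  have hc0 : coeff E (T e0) ≠ 0 := mem_support_iff.mp hE
  have hne : (∑ e ∈ s, T e) ≠ 0 := by
    intro h
    rw [h, coeff_zero] at hcoeff
    exact hc0 hcoeff.symm
  refine ⟨hne, dmax_eq_of ⟨E, mem_support_iff.mpr (by rw [hcoeff]; exact hc0), hwE⟩ ?_⟩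
  intro E' hE'
  have hc : coeff E' (∑ e ∈ s, T e) ≠ 0 := mem_support_iff.mp hE'
  rw [coeff_sum] at hc
  obtain ⟨e, he, hterm⟩ := Finset.exists_ne_zero_of_sum_ne_zero hc
  have h1 : wdeg n u E' ≤ dmax n u (T e) := le_dmax (mem_support_iff.mpr hterm)
  rcases eq_or_ne e e0 with rfl | hne'
  · exact h1
  · exact h1.trans (le_of_lt (hlt e he hne'))

lemma dmax_aeval_monomial (hinj : Function.Injective (wdeg n u))
    {G : Fin n → MvPolynomial (Fin n) F} {D : Fin n → ℝ}
    (hG : ∀ i, G i ≠ 0) (hD : ∀ i, dmax n u (G i) = D i) (e : Fin n →₀ ℕ) {c : F} (hc : c ≠ 0) :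
    (aeval G) (monomial e c) ≠ 0 ∧
      dmax n u ((aeval G) (monomial e c)) = ∑ i ∈ e.support, (e i : ℝ) * D i := by
  rw [aeval_monomial]
  have halg : algebraMap F (MvPolynomial (Fin n) F) c = C c := rfl
  have hprodne : (e.prod fun i k => G i ^ k) ≠ 0 := by
    rw [Finsupp.prod]
    exact Finset.prod_ne_zero_iff.mpr fun i _ => pow_ne_zero _ (hG i)
  constructor
  · exact mul_ne_zero (by rw [halg]; exact fun h => hc (by simpa using h)) hprodne
  · rw [halg, dmax_mul hinj (fun h => hc (by simpa using h)) hprodne]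
    have hC : dmax n u (C c : MvPolynomial (Fin n) F) = 0 := by
      have : (C c : MvPolynomial (Fin n) F) = monomial 0 c := by simp
      rw [this, dmax_monomial hc, wdeg_zero]
    rw [hC, zero_add, Finsupp.prod,
      dmax_prod hinj (fun i _ => pow_ne_zero _ (hG i))]
    exact Finset.sum_congr rfl fun i _ => by rw [dmax_pow hinj (hG i), hD i]

lemma dmax_aeval_eq (hinj : Function.Injective (wdeg n u))
    {G : Fin n → MvPolynomial (Fin n) F} {c : ℝ} (hcpos : 0 < c)
    (hG : ∀ i, G i ≠ 0) (hD : ∀ i : Fin n, dmax n u (G i) = c * tha n u ^ (i:ℕ))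
    {f : MvPolynomial (Fin n) F} (hf : f ≠ 0) :
    (aeval G) f ≠ 0 ∧ dmax n u ((aeval G) f) = c * dmax n u f := by
  obtain ⟨e0, he0, hw0⟩ := exists_wdeg_eq_dmax hf
  have hrep : (aeval G) f = ∑ e ∈ f.support, (aeval G) (monomial e (coeff e f)) := by
    conv_lhs => rw [← support_sum_monomial_coeff f]
    rw [map_sum]
  have hT : ∀ e ∈ f.support, (aeval G) (monomial e (coeff e f)) ≠ 0 ∧
      dmax n u ((aeval G) (monomial e (coeff e f))) = c * wdeg n u e := by
    intro e he
    have h := dmax_aeval_monomial hinj hG hD e (mem_support_iff.mp he)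
    refine ⟨h.1, h.2.trans ?_⟩
    rw [wdeg_eq_sum_support, Finset.mul_sum]
    exact Finset.sum_congr rfl fun i _ => by ring
  have hlt : ∀ e ∈ f.support, e ≠ e0 →
      dmax n u ((aeval G) (monomial e (coeff e f))) <
      dmax n u ((aeval G) (monomial e0 (coeff e0 f))) := by
    intro e he hne
    rw [(hT e he).2, (hT e0 he0).2]
    refine mul_lt_mul_of_pos_left ?_ hcpos
    have h1 : wdeg n u e ≤ wdeg n u e0 := by rw [hw0]; exact le_dmax he
    exact lt_of_le_of_ne h1 fun h => hne (hinj h)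
  rw [hrep]
  obtain ⟨hne, hdm⟩ := dmax_sum_eq he0 (hT e0 he0).1 hlt
  exact ⟨hne, hdm.trans (by rw [(hT e0 he0).2, hw0])⟩

lemma starP_props (hn : 0 < n) (hu : 0 < u) (hinj : Function.Injective (wdeg n u))
    {g : MvPolynomial (Fin n) F} (hg : g ≠ 0) :
    starP F n u g ≠ 0 ∧ dmax n u (starP F n u g) = tha n u * dmax n u g := by
  have hvne : ∀ i : Fin n, (if h : (i : ℕ) + 1 < n then
      (X (⟨(i : ℕ) + 1, h⟩ : Fin n) : MvPolynomial (Fin n) F)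
      else X (⟨0, i.pos⟩ : Fin n) ^ u) ≠ 0 := by
    intro i
    split
    · exact X_ne_zero _
    · exact pow_ne_zero _ (X_ne_zero _)
  have hvd : ∀ i : Fin n, dmax n u (if h : (i : ℕ) + 1 < n then
      (X (⟨(i : ℕ) + 1, h⟩ : Fin n) : MvPolynomial (Fin n) F)
      else X (⟨0, i.pos⟩ : Fin n) ^ u) = tha n u * tha n u ^ (i : ℕ) := by
    intro i
    split
    · next h =>
      rw [show (X (⟨(i:ℕ)+1,h⟩:Fin n) : MvPolynomial (Fin n) F)
          = monomial (Finsupp.single (⟨(i:ℕ)+1,h⟩:Fin n) 1) 1 from by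
          rw [← X_pow_eq_monomial, pow_one]]
      rw [dmax_monomial one_ne_zero, wdeg_single]
      push_cast
      rw [pow_succ]; ring
    · next h =>
      have hn1 : (i:ℕ) + 1 = n := Nat.le_antisymm i.isLt (not_lt.mp h)
      rw [show (X (⟨0,i.pos⟩:Fin n) : MvPolynomial (Fin n) F) ^ u
          = monomial (Finsupp.single (⟨0,i.pos⟩:Fin n) u) 1 from X_pow_eq_monomial]
      rw [dmax_monomial one_ne_zero, wdeg_single]
      rw [show (((⟨0,i.pos⟩:Fin n)):ℕ) = 0 from rfl, pow_zero, mul_one, ← pow_succ', hn1,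
        tha_pow_n hn]
  exact dmax_aeval_eq hinj (tha_pos n hu) hvne hvd hg

end Poly

end DmaxAux

theorem dmax_pcomp {F : Type*} [Field F] (n u : ℕ) (hn : 0 < n) (hu : 0 < u)
    (hirr : Irreducible ((Polynomial.X : Polynomial ℚ) ^ n - Polynomial.C (u : ℚ)))
    (f g : MvPolynomial (Fin n) F) (hf : f ≠ 0) (hg : 0 < dmax n u g) :
    dmax n u (pcompP n u f g) = dmax n u f * dmax n u g := by
  have hinj := DmaxAux.wdeg_injective hn hu hirr
  have hg0 : g ≠ 0 := by
    intro h
    rw [h] at hg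
    have h0 : dmax n u (0 : MvPolynomial (Fin n) F) = 0 := by
      rw [dmax, dif_neg]; simp
    rw [h0] at hg
    exact lt_irrefl 0 hg
  have hiter : ∀ k : ℕ, (⇑(starP F n u))^[k] g ≠ 0 ∧
      dmax n u ((⇑(starP F n u))^[k] g) = DmaxAux.tha n u ^ k * dmax n u g := by
    intro k
    induction k with
    | zero => exact ⟨hg0, by rw [pow_zero, one_mul]; rfl⟩
    | succ m ih =>
      rw [Function.iterate_succ_apply']
      obtain ⟨h1, h2⟩ := DmaxAux.starP_props hn hu hinj ih.1
      exact ⟨h1, by rw [h2, ih.2, pow_succ]; ring⟩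
  have hmain := DmaxAux.dmax_aeval_eq (c := dmax n u g) hinj hg
      (fun i => (hiter (i:ℕ)).1) (fun i => by rw [(hiter (i:ℕ)).2]; ring) hf
  rw [pcompP, hmain.2, mul_comm]

end
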